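/- Each ridge polynomial φ̃_{n,k}(x) = (1/√π) U_n(x₁ cos(kh) + x₂ sin(kh)) is a polynomial of degree n in (x₁,x₂) that is orthogonal in L²(B_2) to every polynomial of total degree at most n−1. -/

import Mathlib

open Real MeasureTheory

lemma chebU_aux (n : ℕ) : (Polynomial.Chebyshev.U ℝ n).natDegree ≤ n ∧
    (Polynomial.Chebyshev.U ℝ n).coeff n = 2 ^ n := by
  induction n using Nat.strong_induction_on with
  | _ n ih =>
    match n with
    | 0 => simp [Polynomial.Chebyshev.U_zero]
    | 1 =>
      constructor <;>
        simp [Polynomial.Chebyshev.U_one, Polynomial.coeff_X, Polynomial.natDegree_X]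
    | (m+2) =>
      have h1 := ih (m+1) (by omega)
      have h0 := ih m (by omega)
      have key : Polynomial.Chebyshev.U ℝ ((m:ℕ)+2 : ℕ)
          = 2 * Polynomial.X * Polynomial.Chebyshev.U ℝ ((m+1 : ℕ) : ℤ)
            - Polynomial.Chebyshev.U ℝ (m : ℕ) := by
        push_cast
        exact Polynomial.Chebyshev.U_add_two ℝ m
      constructor
      · rw [key]
        refine le_trans (Polynomial.natDegree_sub_le _ _) ?_
        simp only [max_le_iff]
        constructor
        · refine le_trans (Polynomial.natDegree_mul_le) ?_
          have : (2 * Polynomial.X : Polynomial ℝ).natDegree ≤ 1 := by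
            refine le_trans Polynomial.natDegree_mul_le ?_; simp
          omega
        · omega
      · rw [key]
        have hz : (Polynomial.Chebyshev.U ℝ (m:ℤ)).coeff (m+2) = 0 :=
          Polynomial.coeff_eq_zero_of_natDegree_lt (by omega)
        rw [Polynomial.coeff_sub, hz, sub_zero]
        have h2 : (2 * Polynomial.X * Polynomial.Chebyshev.U ℝ ((m+1:ℕ):ℤ))
            = 2 * (Polynomial.X * Polynomial.Chebyshev.U ℝ ((m+1:ℕ):ℤ)) := by ring
        rw [h2, Polynomial.coeff_ofNat_mul, Polynomial.coeff_X_mul, h1.2]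
        ring

lemma chebU_natDegree (n : ℕ) : (Polynomial.Chebyshev.U ℝ n).natDegree = n := by
  refine le_antisymm (chebU_aux n).1 (Polynomial.le_natDegree_of_ne_zero ?_)
  rw [(chebU_aux n).2]; positivity

lemma totalDegree_aeval_le_mv {σ : Type*} (f : σ → MvPolynomial σ ℝ)
    (hf : ∀ i, (f i).totalDegree ≤ 1) (Q : MvPolynomial σ ℝ) :
    (MvPolynomial.aeval f Q).totalDegree ≤ Q.totalDegree := by
  rw [MvPolynomial.aeval_def, MvPolynomial.eval₂]
  refine (MvPolynomial.totalDegree_finset_sum _ _).trans ?_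
  apply Finset.sup_le
  intro d hd
  refine le_trans (MvPolynomial.totalDegree_mul _ _) ?_
  rw [MvPolynomial.algebraMap_eq, MvPolynomial.totalDegree_C, zero_add]
  rw [show (d.prod fun n e => f n ^ e) = ∏ i ∈ d.support, f i ^ d i from rfl]
  refine le_trans (MvPolynomial.totalDegree_finset_prod _ _) ?_
  have step : ∀ i ∈ d.support, (f i ^ d i).totalDegree ≤ d i :=
    fun i _ => le_trans (MvPolynomial.totalDegree_pow _ _)
      (le_trans (Nat.mul_le_mul_left _ (hf i)) (by omega))
  exact le_trans (Finset.sum_le_sum step) (MvPolynomial.le_totalDegree hd)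

lemma totalDegree_polyAeval_le {σ : Type*} (L : MvPolynomial σ ℝ) (hL : L.totalDegree ≤ 1)
    (p : Polynomial ℝ) :
    (Polynomial.aeval L p : MvPolynomial σ ℝ).totalDegree ≤ p.natDegree := by
  rw [Polynomial.aeval_def, Polynomial.eval₂_eq_sum_range]
  refine (MvPolynomial.totalDegree_finset_sum _ _).trans ?_
  apply Finset.sup_le
  intro i hi
  refine le_trans (MvPolynomial.totalDegree_mul _ _) ?_
  rw [MvPolynomial.algebraMap_eq, MvPolynomial.totalDegree_C, zero_add]
  refine le_trans (MvPolynomial.totalDegree_pow _ _) ?_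
  have := Finset.mem_range.mp hi
  calc i * L.totalDegree ≤ i * 1 := Nat.mul_le_mul_left _ hL
  _ ≤ p.natDegree := by omega

lemma ridge_part1 (n : ℕ) (c s : ℝ) (hcs : c^2 + s^2 = 1) :
    ∃ P : MvPolynomial (Fin 2) ℝ, P.totalDegree = n ∧
      ∀ x : Fin 2 → ℝ,
        MvPolynomial.eval x P
          = (1 / Real.sqrt π) *
              (Polynomial.Chebyshev.U ℝ n).eval (x 0 * c + x 1 * s) := by
  set L : MvPolynomial (Fin 2) ℝ := c • MvPolynomial.X 0 + s • MvPolynomial.X 1 with hLdef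
  have hL : L.totalDegree ≤ 1 := by
    refine le_trans (MvPolynomial.totalDegree_add _ _) ?_
    simp only [max_le_iff]
    constructor <;>
      exact le_trans (MvPolynomial.totalDegree_smul_le _ _)
        (le_of_eq (MvPolynomial.totalDegree_X _))
  set P : MvPolynomial (Fin 2) ℝ :=
    MvPolynomial.C (1 / Real.sqrt π) * Polynomial.aeval L (Polynomial.Chebyshev.U ℝ n) with hP
  refine ⟨P, ?_, ?_⟩
  · have hsq : Real.sqrt π > 0 := Real.sqrt_pos.mpr Real.pi_pos
    have ha : (1 / Real.sqrt π) ≠ 0 := by positivity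
    apply le_antisymm
    · refine le_trans (MvPolynomial.totalDegree_mul _ _) ?_
      rw [MvPolynomial.totalDegree_C, zero_add]
      exact le_trans (totalDegree_polyAeval_le L hL _) (le_of_eq (chebU_natDegree n))
    · set ψ := MvPolynomial.aeval (R := ℝ)
        ![c • (Polynomial.X : Polynomial ℝ), s • Polynomial.X] with hψ
      have hψL : ψ L = Polynomial.X := by
        rw [hLdef, map_add, _root_.map_smul, _root_.map_smul, hψ, MvPolynomial.aeval_X, MvPolynomial.aeval_X]
        simp only [Matrix.cons_val_zero, Matrix.cons_val_one, Matrix.head_cons, smul_smul,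
          ← add_smul]
        rw [show c * c + s * s = 1 by nlinarith, one_smul]
      have hψP : ψ P = Polynomial.C (1 / Real.sqrt π) * Polynomial.Chebyshev.U ℝ n := by
        rw [hP, map_mul, ← Polynomial.aeval_algHom_apply, hψL, Polynomial.aeval_X_left_apply]
        congr 1
        simp [MvPolynomial.algebraMap_eq]
      have hb : (ψ P).natDegree ≤ P.totalDegree * 1 :=
        MvPolynomial.aeval_natDegree_le _ le_rfl _ (fun i => by
          fin_cases i <;>
            exact le_trans (Polynomial.natDegree_smul_le _ _) (le_of_eq Polynomial.natDegree_X))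
      calc n = (ψ P).natDegree := by
              rw [hψP, Polynomial.natDegree_C_mul ha, chebU_natDegree]
      _ ≤ P.totalDegree * 1 := hb
      _ = P.totalDegree := mul_one _
  · intro x
    have h : MvPolynomial.eval x (Polynomial.aeval L (Polynomial.Chebyshev.U ℝ n))
        = Polynomial.eval (MvPolynomial.eval x L) (Polynomial.Chebyshev.U ℝ n) := by
      simp only [Polynomial.aeval_def, Polynomial.eval₂_eq_sum_range, map_sum, map_mul, map_pow,
        MvPolynomial.eval_C, MvPolynomial.algebraMap_eq]
      exact (Polynomial.eval_eq_sum_range _).symm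
    rw [hP, map_mul, h]
    simp [hLdef, mul_comm]

lemma Ilem : ∀ (j m : ℕ), j < m → (∫ θ in (0:ℝ)..π, Real.cos (m * θ) * Real.cos θ ^ j) = 0 := by
  intro j
  induction j with
  | zero =>
    intro m hm
    simp only [pow_zero, mul_one]
    have hm0 : (m : ℝ) ≠ 0 := by positivity
    rw [intervalIntegral.integral_comp_mul_left Real.cos hm0]
    simp [Real.sin_nat_mul_pi]
  | succ j ih =>
    intro m hm
    obtain ⟨l, rfl⟩ : ∃ l, m = l + 1 := ⟨m - 1, by omega⟩
    have hid : ∀ θ : ℝ, Real.cos ((l+1 : ℕ) * θ) * Real.cos θ ^ (j+1)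
        = (Real.cos ((l+2 : ℕ) * θ) * Real.cos θ ^ j
          + Real.cos ((l : ℕ) * θ) * Real.cos θ ^ j) / 2 := by
      intro θ
      have h1 : ((l+2 : ℕ) : ℝ) * θ = ((l+1 : ℕ) : ℝ) * θ + θ := by push_cast; ring
      have h2 : ((l : ℕ) : ℝ) * θ = ((l+1 : ℕ) : ℝ) * θ - θ := by push_cast; ring
      rw [h1, h2, Real.cos_add, Real.cos_sub]
      ring
    simp only [hid]
    rw [intervalIntegral.integral_div]
    have i1 : IntervalIntegrable (fun θ => Real.cos ((l+2:ℕ) * θ) * Real.cos θ ^ j)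
        volume 0 π := (Continuous.intervalIntegrable (by fun_prop) _ _)
    have i2 : IntervalIntegrable (fun θ => Real.cos ((l:ℕ) * θ) * Real.cos θ ^ j)
        volume 0 π := (Continuous.intervalIntegrable (by fun_prop) _ _)
    rw [intervalIntegral.integral_add i1 i2, ih (l+2) (by omega), ih l (by omega)]
    norm_num

lemma Jlem (m j : ℕ) (hm : j + 2 ≤ m) :
    (∫ θ in (0:ℝ)..π, Real.sin (m * θ) * Real.sin θ * Real.cos θ ^ j) = 0 := by
  obtain ⟨l, rfl⟩ : ∃ l, m = l + 1 := ⟨m - 1, by omega⟩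
  have hid : ∀ θ : ℝ, Real.sin ((l+1 : ℕ) * θ) * Real.sin θ * Real.cos θ ^ j
      = (Real.cos ((l : ℕ) * θ) * Real.cos θ ^ j
        - Real.cos ((l+2 : ℕ) * θ) * Real.cos θ ^ j) / 2 := by
    intro θ
    have h1 : ((l+2 : ℕ) : ℝ) * θ = ((l+1 : ℕ) : ℝ) * θ + θ := by push_cast; ring
    have h2 : ((l : ℕ) : ℝ) * θ = ((l+1 : ℕ) : ℝ) * θ - θ := by push_cast; ring
    rw [h1, h2, Real.cos_add, Real.cos_sub]
    ring
  simp only [hid]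
  rw [intervalIntegral.integral_div]
  have i1 : IntervalIntegrable (fun θ => Real.cos ((l:ℕ) * θ) * Real.cos θ ^ j)
      volume 0 π := (Continuous.intervalIntegrable (by fun_prop) _ _)
  have i2 : IntervalIntegrable (fun θ => Real.cos ((l+2:ℕ) * θ) * Real.cos θ ^ j)
      volume 0 π := (Continuous.intervalIntegrable (by fun_prop) _ _)
  rw [intervalIntegral.integral_sub i1 i2, Ilem j l (by omega), Ilem j (l+2) (by omega)]
  norm_num

-- monomial orthogonality against U_n with weight sqrt(1-u^2)
lemma Kmono (n j : ℕ) (hj : j < n) :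
    (∫ u in (-1:ℝ)..1,
      (Polynomial.Chebyshev.U ℝ n).eval u * u ^ j * Real.sqrt (1 - u^2)) = 0 := by
  set g : ℝ → ℝ := fun u => (Polynomial.Chebyshev.U ℝ n).eval u * u ^ j * Real.sqrt (1 - u^2)
    with hg
  have hgc : Continuous g := by
    apply Continuous.mul
    · exact Continuous.mul (Polynomial.continuous _) (by fun_prop)
    · fun_prop
  have hsub : (∫ θ in (0:ℝ)..π, (-Real.sin θ) • g (Real.cos θ))
      = ∫ u in (1:ℝ)..(-1:ℝ), g u := by
    have h := intervalIntegral.integral_comp_smul_deriv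
      (f := Real.cos) (f' := fun x => -Real.sin x) (g := g) (a := 0) (b := π)
      (fun x _ => Real.hasDerivAt_cos x) (by fun_prop) hgc
    rw [Real.cos_zero, Real.cos_pi] at h
    exact h
  have h2 : (∫ θ in (0:ℝ)..π, (-Real.sin θ) • g (Real.cos θ))
      = -∫ θ in (0:ℝ)..π, Real.sin θ * g (Real.cos θ) := by
    rw [← intervalIntegral.integral_neg]
    congr 1 with θ
    simp [smul_eq_mul]
  have h3 : (∫ u in (-1:ℝ)..1, g u) = ∫ θ in (0:ℝ)..π, Real.sin θ * g (Real.cos θ) := by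
    rw [intervalIntegral.integral_symm, ← hsub, h2, neg_neg]
  rw [h3]
  have heq : Set.EqOn (fun θ => Real.sin θ * g (Real.cos θ))
      (fun θ => Real.sin (((n+1:ℕ):ℝ) * θ) * Real.sin θ * Real.cos θ ^ j)
      (Set.uIcc 0 π) := by
    intro θ hθ
    rw [Set.uIcc_of_le Real.pi_pos.le] at hθ
    have hs : Real.sin θ ≥ 0 := Real.sin_nonneg_of_nonneg_of_le_pi hθ.1 hθ.2
    have hsq : Real.sqrt (1 - Real.cos θ ^ 2) = Real.sin θ := by
      rw [show 1 - Real.cos θ ^ 2 = Real.sin θ ^ 2 by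
        have := Real.sin_sq_add_cos_sq θ; linarith]
      exact Real.sqrt_sq hs
    have hU := Polynomial.Chebyshev.U_real_cos θ (n : ℤ)
    simp only [hg]
    rw [hsq]
    push_cast at hU ⊢
    linear_combination (Real.sin θ * Real.cos θ ^ j) * hU
  rw [intervalIntegral.integral_congr heq]
  exact Jlem (n+1) j (by omega)

lemma Kpoly (n : ℕ) (r : Polynomial ℝ) (hr : r.natDegree < n) :
    (∫ u in (-1:ℝ)..1,
      (Polynomial.Chebyshev.U ℝ n).eval u * r.eval u * Real.sqrt (1 - u^2)) = 0 := by
  have hpt : ∀ u : ℝ, (Polynomial.Chebyshev.U ℝ n).eval u * r.eval u * Real.sqrt (1 - u^2)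
      = ∑ j ∈ Finset.range (r.natDegree + 1),
          r.coeff j * ((Polynomial.Chebyshev.U ℝ n).eval u * u ^ j * Real.sqrt (1 - u^2)) := by
    intro u
    rw [Polynomial.eval_eq_sum_range (p := r), Finset.mul_sum, Finset.sum_mul]
    exact Finset.sum_congr rfl (fun j _ => by ring)
  simp only [hpt]
  rw [intervalIntegral.integral_finset_sum (fun j _ => Continuous.intervalIntegrable
    (u := fun u => r.coeff j * ((Polynomial.Chebyshev.U ℝ n).eval u * u ^ j * Real.sqrt (1 - u^2)))
    (continuous_const.mul (((Polynomial.continuous _).mul (continuous_pow j)).mul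
      ((continuous_const.sub (continuous_pow 2)).sqrt))) _ _)]
  refine Finset.sum_eq_zero (fun j hj => ?_)
  rw [intervalIntegral.integral_const_mul, Kmono n j (by
    have := Finset.mem_range.mp hj; omega), mul_zero]
lemma disk_mono (n a b : ℕ) (hab : a + b < n) :
    (∫ p in {q : ℝ × ℝ | q.1^2 + q.2^2 < 1},
      (Polynomial.Chebyshev.U ℝ n).eval p.1 * (p.1 ^ a * p.2 ^ b)) = 0 := by
  set D : Set (ℝ × ℝ) := {q : ℝ × ℝ | q.1^2 + q.2^2 < 1} with hD
  set F : ℝ × ℝ → ℝ :=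
    fun p => (Polynomial.Chebyshev.U ℝ n).eval p.1 * (p.1 ^ a * p.2 ^ b) with hF
  have hFc : Continuous F :=
    ((Polynomial.continuous _).comp continuous_fst).mul
      (((continuous_fst.pow a)).mul (continuous_snd.pow b))
  have hDopen : IsOpen D := by
    have : Continuous fun q : ℝ × ℝ => q.1^2 + q.2^2 := by fun_prop
    exact isOpen_lt this continuous_const
  have hDm : MeasurableSet D := hDopen.measurableSet
  have hDsub : D ⊆ Metric.closedBall (0 : ℝ × ℝ) 1 := by
    intro q hq
    simp only [hD, Set.mem_setOf_eq] at hq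
    rw [Metric.mem_closedBall, dist_zero_right, Prod.norm_def]
    have h1 : |q.1| ≤ 1 := by rw [abs_le]; constructor <;> nlinarith
    have h2 : |q.2| ≤ 1 := by rw [abs_le]; constructor <;> nlinarith
    simp [Real.norm_eq_abs]
    exact ⟨h1, h2⟩
  have hInt : IntegrableOn F D := by
    refine IntegrableOn.mono_set ?_ hDsub
    exact hFc.continuousOn.integrableOn_compact (isCompact_closedBall _ _)
  have hIndInt : Integrable (D.indicator F) := by
    rwa [integrable_indicator_iff hDm]
  rw [← MeasureTheory.integral_indicator hDm]
  rw [MeasureTheory.Measure.volume_eq_prod] at hIndInt ⊢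
  rw [MeasureTheory.integral_prod _ hIndInt]
  -- inner slice
  have houter : ∀ u : ℝ, (∫ v, D.indicator F (u, v))
      = ((Polynomial.Chebyshev.U ℝ n).eval u * u ^ a) *
          ((Real.sqrt (1-u^2)) ^ (b+1) - (-(Real.sqrt (1-u^2))) ^ (b+1)) / (b+1) := by
    intro u
    have hslice : (fun v => D.indicator F (u, v))
        = (Set.Ioo (-(Real.sqrt (1-u^2))) (Real.sqrt (1-u^2))).indicator
            (fun v => ((Polynomial.Chebyshev.U ℝ n).eval u * u ^ a) * v ^ b) := by
      funext v
      have hmem : (u, v) ∈ D ↔ v ∈ Set.Ioo (-(Real.sqrt (1-u^2))) (Real.sqrt (1-u^2)) := by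
        simp only [hD, Set.mem_setOf_eq, Set.mem_Ioo, ← abs_lt]
        rw [show (u^2 + v^2 < 1) ↔ (v^2 < 1 - u^2) by constructor <;> intro h <;> nlinarith]
        rw [Real.lt_sqrt (abs_nonneg v), sq_abs]
      by_cases h : (u, v) ∈ D
      · rw [Set.indicator_of_mem h, Set.indicator_of_mem (hmem.mp h)]
        simp only [hF]; ring
      · rw [Set.indicator_of_notMem h, Set.indicator_of_notMem (fun hc => h (hmem.mpr hc))]
    rw [hslice, MeasureTheory.integral_indicator measurableSet_Ioo]
    rw [← MeasureTheory.integral_Ioc_eq_integral_Ioo,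
      ← intervalIntegral.integral_of_le
        (le_trans (neg_nonpos.mpr (Real.sqrt_nonneg _)) (Real.sqrt_nonneg _))]
    rw [intervalIntegral.integral_const_mul, integral_pow]
    ring
  simp only [houter]
  rcases Nat.even_or_odd b with hb | hb
  · -- b even
    obtain ⟨t, ht⟩ := hb
    have hbodd : Odd (b+1) := by exact ⟨t, by omega⟩
    set r : Polynomial ℝ := Polynomial.X ^ a * (1 - Polynomial.X ^ 2) ^ t with hr
    have hrdeg : r.natDegree < n := by
      have h1 : (1 - Polynomial.X ^ 2 : Polynomial ℝ).natDegree ≤ 2 := by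
        refine le_trans (Polynomial.natDegree_sub_le _ _) ?_
        simp [Polynomial.natDegree_one, Polynomial.natDegree_X_pow]
      calc r.natDegree ≤ (Polynomial.X ^ a : Polynomial ℝ).natDegree
            + ((1 - Polynomial.X ^ 2 : Polynomial ℝ) ^ t).natDegree :=
            Polynomial.natDegree_mul_le
      _ ≤ a + t * 2 := by
          gcongr
          · exact le_of_eq (Polynomial.natDegree_X_pow a)
          · exact le_trans Polynomial.natDegree_pow_le (by
              exact Nat.mul_le_mul_left t h1)
      _ < n := by omega
    have hpt : ∀ u : ℝ,
        ((Polynomial.Chebyshev.U ℝ n).eval u * u ^ a) *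
          ((Real.sqrt (1-u^2)) ^ (b+1) - (-(Real.sqrt (1-u^2))) ^ (b+1)) / (b+1)
        = (2/(b+1)) *
            ((Polynomial.Chebyshev.U ℝ n).eval u * r.eval u * Real.sqrt (1-u^2)) := by
      intro u
      rw [hbodd.neg_pow]
      have hkey : (Real.sqrt (1-u^2)) ^ (b+1) = (1-u^2)^t * Real.sqrt (1-u^2) := by
        by_cases hu : 1 - u^2 ≥ 0
        · rw [show b + 1 = 2*t + 1 by omega, pow_succ, pow_mul, Real.sq_sqrt hu]
        · rw [Real.sqrt_eq_zero_of_nonpos (by linarith)]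
          rw [zero_pow (by omega), mul_zero]
      rw [hkey, hr]
      simp only [Polynomial.eval_mul, Polynomial.eval_pow, Polynomial.eval_sub,
        Polynomial.eval_one, Polynomial.eval_X]
      ring
    simp only [hpt]
    have hvanish : ∀ u : ℝ, u ∉ Set.Ioc (-1:ℝ) 1 →
        (2/((b:ℝ)+1)) *
          ((Polynomial.Chebyshev.U ℝ n).eval u * r.eval u * Real.sqrt (1-u^2)) = 0 := by
      intro u hu
      simp only [Set.mem_Ioc, not_and_or, not_lt, not_le] at hu
      have : Real.sqrt (1-u^2) = 0 := by
        apply Real.sqrt_eq_zero_of_nonpos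
        rcases hu with h | h <;> nlinarith
      rw [this, mul_zero, mul_zero]
    rw [← MeasureTheory.setIntegral_eq_integral_of_forall_compl_eq_zero hvanish]
    rw [← intervalIntegral.integral_of_le (by norm_num : (-1:ℝ) ≤ 1)]
    rw [intervalIntegral.integral_const_mul, Kpoly n r hrdeg, mul_zero]
  · -- b odd
    have hbev : Even (b+1) := Odd.add_one hb
    have : ∀ u : ℝ,
        ((Polynomial.Chebyshev.U ℝ n).eval u * u ^ a) *
          ((Real.sqrt (1-u^2)) ^ (b+1) - (-(Real.sqrt (1-u^2))) ^ (b+1)) / (b+1) = 0 := by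
      intro u
      rw [hbev.neg_pow, sub_self, mul_zero, zero_div]
    simp only [this, integral_zero]

noncomputable def rotL (c s : ℝ) : EuclideanSpace ℝ (Fin 2) →ₗ[ℝ] EuclideanSpace ℝ (Fin 2) where
  toFun x := (WithLp.equiv 2 (Fin 2 → ℝ)).symm ![c * x 0 - s * x 1, s * x 0 + c * x 1]
  map_add' x y := by
    ext i
    fin_cases i <;>
      simp <;> ring
  map_smul' r x := by
    ext i
    fin_cases i <;>
      simp [smul_eq_mul] <;> ring

@[simp] lemma rotL_apply_0 (c s : ℝ) (x : EuclideanSpace ℝ (Fin 2)) :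
    rotL c s x 0 = c * x 0 - s * x 1 := rfl

@[simp] lemma rotL_apply_1 (c s : ℝ) (x : EuclideanSpace ℝ (Fin 2)) :
    rotL c s x 1 = s * x 0 + c * x 1 := rfl

noncomputable def rotIso (c s : ℝ) (h : c^2 + s^2 = 1) :
    EuclideanSpace ℝ (Fin 2) ≃ₗᵢ[ℝ] EuclideanSpace ℝ (Fin 2) where
  toLinearEquiv := LinearEquiv.ofLinear (rotL c s) (rotL c (-s))
    (by
      apply LinearMap.ext; intro x
      ext i
      fin_cases i <;>
        (simp [rotL_apply_0, rotL_apply_1];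
          first
          | linear_combination (x 0) * h
          | linear_combination (x 1) * h))
    (by
      apply LinearMap.ext; intro x
      ext i
      fin_cases i <;>
        (simp [rotL_apply_0, rotL_apply_1];
          first
          | linear_combination (x 0) * h
          | linear_combination (x 1) * h))
  norm_map' x := by
    rw [EuclideanSpace.norm_eq, EuclideanSpace.norm_eq]
    congr 1
    rw [Fin.sum_univ_two, Fin.sum_univ_two]
    simp only [LinearEquiv.ofLinear_apply, rotL_apply_0, rotL_apply_1, Real.norm_eq_abs, sq_abs]
    linear_combination (x 0 ^ 2 + x 1 ^ 2) * h


lemma ball_mono (n a b : ℕ) (hab : a + b < n) :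
    (∫ x in Metric.ball (0 : EuclideanSpace ℝ (Fin 2)) 1,
      (Polynomial.Chebyshev.U ℝ n).eval (x 0) * ((x 0) ^ a * (x 1) ^ b)) = 0 := by
  set e : (ℝ × ℝ) ≃ᵐ EuclideanSpace ℝ (Fin 2) :=
    (MeasurableEquiv.finTwoArrow (α := ℝ)).symm.trans
      (MeasurableEquiv.toLp 2 (Fin 2 → ℝ)) with he
  have hmp : MeasurePreserving e := by
    exact ((EuclideanSpace.volume_preserving_symm_measurableEquiv_toLp (Fin 2)).symm).comp
      ((volume_preserving_finTwoArrow ℝ).symm)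
  have happ : ∀ p : ℝ × ℝ, (e p) 0 = p.1 ∧ (e p) 1 = p.2 := by
    intro p
    constructor <;> rfl
  have hpre : e ⁻¹' (Metric.ball (0 : EuclideanSpace ℝ (Fin 2)) 1)
      = {q : ℝ × ℝ | q.1^2 + q.2^2 < 1} := by
    ext p
    simp only [Set.mem_preimage, Metric.mem_ball, dist_zero_right, Set.mem_setOf_eq]
    rw [EuclideanSpace.norm_eq, Fin.sum_univ_two, (happ p).1, (happ p).2]
    rw [Real.sqrt_lt' one_pos]
    simp [Real.norm_eq_abs, sq_abs]
  have := hmp.setIntegral_preimage_emb e.measurableEmbedding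
    (fun x => (Polynomial.Chebyshev.U ℝ n).eval (x 0) * ((x 0) ^ a * (x 1) ^ b))
    (Metric.ball (0 : EuclideanSpace ℝ (Fin 2)) 1)
  rw [← this, hpre]
  have hcong : ∀ p : ℝ × ℝ,
      (Polynomial.Chebyshev.U ℝ n).eval ((e p) 0) * (((e p) 0) ^ a * ((e p) 1) ^ b)
      = (Polynomial.Chebyshev.U ℝ n).eval p.1 * (p.1 ^ a * p.2 ^ b) := by
    intro p; rw [(happ p).1, (happ p).2]
  simp only [hcong]
  exact disk_mono n a b hab

@[simp] lemma rotIso_apply (c s : ℝ) (h : c^2 + s^2 = 1) (x : EuclideanSpace ℝ (Fin 2)) :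
    rotIso c s h x = rotL c s x := rfl

lemma eval_aeval_mv {σ : Type*} (x : σ → ℝ) (f : σ → MvPolynomial σ ℝ)
    (Q : MvPolynomial σ ℝ) :
    MvPolynomial.eval x (MvPolynomial.aeval f Q)
      = MvPolynomial.eval (fun i => MvPolynomial.eval x (f i)) Q := by
  rw [MvPolynomial.aeval_def, MvPolynomial.algebraMap_eq, ← MvPolynomial.eval_assoc]
  rfl



lemma lin_totalDegree (a b : ℝ) (i j : Fin 2) :
    (a • MvPolynomial.X i + b • MvPolynomial.X j : MvPolynomial (Fin 2) ℝ).totalDegree ≤ 1 := by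
  refine le_trans (MvPolynomial.totalDegree_add _ _) ?_
  simp only [max_le_iff]
  constructor <;>
    exact le_trans (MvPolynomial.totalDegree_smul_le _ _)
      (le_of_eq (MvPolynomial.totalDegree_X _))

lemma ball_ortho (n : ℕ) (c s : ℝ) (hcs : c^2 + s^2 = 1)
    (Q : MvPolynomial (Fin 2) ℝ) (hQ : Q.totalDegree < n) :
    (∫ x in Metric.ball (0 : EuclideanSpace ℝ (Fin 2)) 1,
      (Polynomial.Chebyshev.U ℝ n).eval (x 0 * c + x 1 * s)
        * MvPolynomial.eval (fun i => x i) Q) = 0 := by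
  -- rotate
  set ρ := rotIso c s hcs with hρ
  have hmp : MeasurePreserving ρ := ρ.measurePreserving
  have hemb : MeasurableEmbedding ρ := ρ.toHomeomorph.measurableEmbedding
  have hpre : ⇑ρ ⁻¹' (Metric.ball (0 : EuclideanSpace ℝ (Fin 2)) 1)
      = Metric.ball (0 : EuclideanSpace ℝ (Fin 2)) 1 := by
    ext x
    simp only [Set.mem_preimage, mem_ball_zero_iff, ρ.norm_map]
  have hrot := hmp.setIntegral_preimage_emb hemb
    (fun x => (Polynomial.Chebyshev.U ℝ n).eval (x 0 * c + x 1 * s)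
        * MvPolynomial.eval (fun i => x i) Q)
    (Metric.ball (0 : EuclideanSpace ℝ (Fin 2)) 1)
  rw [← hrot, hpre]
  -- the rotated polynomial
  set f : Fin 2 → MvPolynomial (Fin 2) ℝ :=
    ![c • MvPolynomial.X 0 + (-s) • MvPolynomial.X 1,
      s • MvPolynomial.X 0 + c • MvPolynomial.X 1] with hf
  set Q' : MvPolynomial (Fin 2) ℝ := MvPolynomial.aeval f Q with hQ'
  have hQ'deg : Q'.totalDegree < n := by
    refine lt_of_le_of_lt (totalDegree_aeval_le_mv f (fun i => ?_) Q) hQ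
    fin_cases i <;> simp only [hf, Matrix.cons_val_zero, Matrix.cons_val_one, Matrix.head_cons] <;>
      exact lin_totalDegree _ _ _ _
  have hpt : ∀ x : EuclideanSpace ℝ (Fin 2),
      (Polynomial.Chebyshev.U ℝ n).eval ((ρ x) 0 * c + (ρ x) 1 * s)
          * MvPolynomial.eval (fun i => (ρ x) i) Q
      = (Polynomial.Chebyshev.U ℝ n).eval (x 0) * MvPolynomial.eval (fun i => x i) Q' := by
    intro x
    have h1 : (ρ x) 0 * c + (ρ x) 1 * s = x 0 := by
      simp only [hρ, rotIso_apply, rotL_apply_0, rotL_apply_1]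
      linear_combination (x 0) * hcs
    have h2 : MvPolynomial.eval (fun i => (ρ x) i) Q = MvPolynomial.eval (fun i => x i) Q' := by
      rw [hQ', eval_aeval_mv]
      have harg : (fun i : Fin 2 => (ρ x) i)
          = (fun i => MvPolynomial.eval (fun j : Fin 2 => x j) (f i)) := by
        funext i
        fin_cases i <;> simp [hf, hρ] <;> ring
      rw [harg]
    rw [h1, h2]
  simp only [hpt]
  -- expand Q' into monomials
  have hev : ∀ x : EuclideanSpace ℝ (Fin 2),
      MvPolynomial.eval (fun i => x i) Q'
        = ∑ d ∈ Q'.support, MvPolynomial.coeff d Q' * (x 0 ^ d 0 * x 1 ^ d 1) := by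
    intro x
    rw [MvPolynomial.eval_eq']
    exact Finset.sum_congr rfl (fun d _ => by rw [Fin.prod_univ_two])
  have hcont : ∀ i : Fin 2, Continuous (fun x : EuclideanSpace ℝ (Fin 2) => x i) :=
    fun i => by fun_prop
  have hintg : ∀ d : Fin 2 →₀ ℕ,
      IntegrableOn (fun x : EuclideanSpace ℝ (Fin 2) =>
        (Polynomial.Chebyshev.U ℝ n).eval (x 0) *
          (MvPolynomial.coeff d Q' * (x 0 ^ d 0 * x 1 ^ d 1)))
        (Metric.ball (0 : EuclideanSpace ℝ (Fin 2)) 1) := by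
    intro d
    refine IntegrableOn.mono_set ?_ Metric.ball_subset_closedBall
    have hc : Continuous (fun x : EuclideanSpace ℝ (Fin 2) =>
        (Polynomial.Chebyshev.U ℝ n).eval (x 0) *
          (MvPolynomial.coeff d Q' * (x 0 ^ d 0 * x 1 ^ d 1))) :=
      ((Polynomial.continuous _).comp (hcont 0)).mul
        (continuous_const.mul (((hcont 0).pow _).mul ((hcont 1).pow _)))
    exact hc.continuousOn.integrableOn_compact (isCompact_closedBall _ _)
  calc (∫ x in Metric.ball (0 : EuclideanSpace ℝ (Fin 2)) 1,
        (Polynomial.Chebyshev.U ℝ n).eval (x 0) * MvPolynomial.eval (fun i => x i) Q')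
      = ∫ x in Metric.ball (0 : EuclideanSpace ℝ (Fin 2)) 1,
          ∑ d ∈ Q'.support, (Polynomial.Chebyshev.U ℝ n).eval (x 0) *
            (MvPolynomial.coeff d Q' * (x 0 ^ d 0 * x 1 ^ d 1)) := by
        refine setIntegral_congr_fun (Metric.isOpen_ball).measurableSet (fun x _ => ?_)
        rw [hev x, Finset.mul_sum]
    _ = ∑ d ∈ Q'.support, ∫ x in Metric.ball (0 : EuclideanSpace ℝ (Fin 2)) 1,
          (Polynomial.Chebyshev.U ℝ n).eval (x 0) *
            (MvPolynomial.coeff d Q' * (x 0 ^ d 0 * x 1 ^ d 1)) :=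
        MeasureTheory.integral_finset_sum _ (fun d _ => hintg d)
    _ = 0 := by
        refine Finset.sum_eq_zero (fun d hd => ?_)
        have hdeg : d 0 + d 1 < n := by
          have hsum : d 0 + d 1 = d.sum (fun _ e => e) := by
            rw [Finsupp.sum_fintype _ _ (fun _ => rfl), Fin.sum_univ_two]
          have := MvPolynomial.le_totalDegree hd
          omega
        have : ∀ x : EuclideanSpace ℝ (Fin 2),
            (Polynomial.Chebyshev.U ℝ n).eval (x 0) *
              (MvPolynomial.coeff d Q' * (x 0 ^ d 0 * x 1 ^ d 1))
            = MvPolynomial.coeff d Q' *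
              ((Polynomial.Chebyshev.U ℝ n).eval (x 0) * (x 0 ^ d 0 * x 1 ^ d 1)) := by
          intro x; ring
        simp only [this]
        rw [MeasureTheory.integral_const_mul, ball_mono n (d 0) (d 1) hdeg, mul_zero]

/-- Each ridge polynomial `φ̃_{n,k}(x) = (1/√π) U_n(x₁ cos(kh) + x₂ sin(kh))` is a
polynomial of total degree `n` and is orthogonal in `L²(B_2)` to all polynomials of
total degree at most `n − 1`. -/
theorem ridge_polynomial_degree_and_orthogonality (n k : ℕ) (hk : k ≤ n) :
    (∃ P : MvPolynomial (Fin 2) ℝ, P.totalDegree = n ∧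
      ∀ x : Fin 2 → ℝ,
        MvPolynomial.eval x P
          = (1 / Real.sqrt π) *
              (Polynomial.Chebyshev.U ℝ n).eval
                (x 0 * Real.cos (k * (π / (n + 1))) + x 1 * Real.sin (k * (π / (n + 1))))) ∧
    (∀ Q : MvPolynomial (Fin 2) ℝ, Q.totalDegree < n →
      (∫ x in Metric.ball (0 : EuclideanSpace ℝ (Fin 2)) 1,
        ((1 / Real.sqrt π) *
            (Polynomial.Chebyshev.U ℝ n).eval
              (x 0 * Real.cos (k * (π / (n + 1))) + x 1 * Real.sin (k * (π / (n + 1))))) *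
          MvPolynomial.eval (fun i => x i) Q) = 0) := by
  set c : ℝ := Real.cos (k * (π / (n + 1))) with hc
  set s : ℝ := Real.sin (k * (π / (n + 1))) with hs
  have hcs : c ^ 2 + s ^ 2 = 1 := by rw [hc, hs]; exact Real.cos_sq_add_sin_sq _
  constructor
  · exact ridge_part1 n c s hcs
  · intro Q hQ
    have h := ball_ortho n c s hcs Q hQ
    have hpt : ∀ x : EuclideanSpace ℝ (Fin 2),
        ((1 / Real.sqrt π) * (Polynomial.Chebyshev.U ℝ n).eval (x 0 * c + x 1 * s)) *
          MvPolynomial.eval (fun i => x i) Q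
        = (1 / Real.sqrt π) * ((Polynomial.Chebyshev.U ℝ n).eval (x 0 * c + x 1 * s) *
            MvPolynomial.eval (fun i => x i) Q) := fun x => by ring
    simp only [hpt]
    rw [MeasureTheory.integral_const_mul, h, mul_zero]
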